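/- arXiv:2301.13328 — 7 statements merged into one kernel-verified Lean document; each statement's English description precedes it below -/
import Mathlib

section
/- Let f and g be Boolean functions over disjoint variable sets. Then a term t is a prime implicant of f ∧ g if and only if t = t₁ ∧ t₂ where t₁ is a prime implicant of f and t₂ is a prime implicant of g. Moreover this decomposition is unique: the map (t₁, t₂) ↦ t₁ ∧ t₂ is a bijection between IP(f) × IP(g) and IP(f ∧ g). -/
abbrev Term (V : Type*) := V → Option Bool

def Extends {V : Type*} (a : V → Bool) (t : Term V) : Prop :=
  ∀ v b, t v = some b → a v = b

def SubTerm {V : Type*} (s t : Term V) : Prop :=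
  ∀ v b, s v = some b → t v = some b

def Implicant {V : Type*} (f : (V → Bool) → Bool) (t : Term V) : Prop :=
  ∀ a, Extends a t → f a = true

def PrimeImplicant {V : Type*} (f : (V → Bool) → Bool) (t : Term V) : Prop :=
  Implicant f t ∧ ∀ s, SubTerm s t → Implicant f s → s = t

def IP {V : Type*} (f : (V → Bool) → Bool) : Set (Term V) :=
  {t | PrimeImplicant f t}

def Compatible {V : Type*} (t t' : Term V) : Prop :=
  ∀ v b b', t v = some b → t' v = some b' → b = b'

def combine {V : Type*} (t t' : Term V) : Term V :=
  fun v => (t v).orElse (fun _ => t' v)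

def maxSet {V : Type*} (S : Set (Term V)) : Set (Term V) :=
  {t ∈ S | ∀ t' ∈ S, SubTerm t' t → t' = t}

def fAnd {V : Type*} (f g : (V → Bool) → Bool) : (V → Bool) → Bool :=
  fun a => f a && g a

def restrict {V : Type*} [DecidableEq V] (f : (V → Bool) → Bool) (x : V) (b : Bool) :
    (V → Bool) → Bool :=
  fun a => f (Function.update a x b)

def SR {V : Type*} (f : (V → Bool) → Bool) (a : V → Bool) : Set (Term V) :=
  {t | PrimeImplicant f t ∧ Extends a t}

section Aux
variable {V : Type*}

lemma extends_mono {a : V → Bool} {s t : Term V} (h : SubTerm s t) (ha : Extends a t) :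
    Extends a s := fun v b hv => ha v b (h v b hv)

lemma implicant_mono {f : (V → Bool) → Bool} {s t : Term V} (h : SubTerm s t)
    (hs : Implicant f s) : Implicant f t := fun a ha => hs a (extends_mono h ha)

lemma subterm_antisymm {s t : Term V} (h1 : SubTerm s t) (h2 : SubTerm t s) : s = t := by
  funext v
  cases hs : s v with
  | some b => rw [h1 v b hs]
  | none =>
    cases ht : t v with
    | some b => exact absurd (h2 v b ht) (by simp [hs])
    | none => rfl

open Classical in
noncomputable def restrX (X : Finset V) (t : Term V) : Term V :=
  fun v => if v ∈ X then t v else none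

lemma restrX_sub (X : Finset V) (t : Term V) : SubTerm (restrX X t) t := by
  intro v b hv
  unfold restrX at hv
  split at hv
  · exact hv
  · exact absurd hv (by simp)

lemma restrX_mem {X : Finset V} {t : Term V} {v : V} {b : Bool}
    (h : restrX X t v = some b) : v ∈ X := by
  by_contra hv
  simp [restrX, hv] at h

open Classical in
lemma restrX_eq_of_mem {X : Finset V} {v : V} (hv : v ∈ X) (t : Term V) :
    restrX X t v = t v := by simp [restrX, hv]

lemma implicant_restrX {X : Finset V} {f : (V → Bool) → Bool}
    (hf : ∀ a a' : V → Bool, (∀ v ∈ X, a v = a' v) → f a = f a')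
    {t : Term V} (ht : Implicant f t) : Implicant f (restrX X t) := by
  intro a ha
  set a' : V → Bool := fun v => match t v with | some b => b | none => a v with ha'
  have hext : Extends a' t := by
    intro v b hv
    simp [ha', hv]
  have h2 : f a = f a' := by
    apply hf
    intro v hv
    cases htv : t v with
    | none => simp [ha', htv]
    | some b =>
      have := ha v b (by rw [restrX_eq_of_mem hv, htv])
      simp [ha', htv, this]
  rw [h2, ht a' hext]

lemma support_subset {X : Finset V} {f : (V → Bool) → Bool}
    (hf : ∀ a a' : V → Bool, (∀ v ∈ X, a v = a' v) → f a = f a')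
    {t : Term V} (ht : PrimeImplicant f t) {v : V} {b : Bool} (hv : t v = some b) :
    v ∈ X := by
  have h := ht.2 (restrX X t) (restrX_sub X t) (implicant_restrX hf ht.1)
  refine restrX_mem (t := t) (b := b) ?_
  rw [h, hv]

lemma combine_sub_left (t₁ t₂ : Term V) : SubTerm t₁ (combine t₁ t₂) := by
  intro v b hv; simp [combine, hv]

lemma combine_some {t₁ t₂ : Term V} {v : V} {b : Bool} (h : combine t₁ t₂ v = some b) :
    t₁ v = some b ∨ (t₁ v = none ∧ t₂ v = some b) := by
  cases h1 : t₁ v with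
  | some c =>
    left
    simp [combine, h1] at h
    simp [h1, h]
  | none =>
    right
    simp [combine, h1] at h
    exact ⟨rfl, h⟩

lemma combine_sub_right {t₁ t₂ : Term V}
    (hdisj : ∀ v (b : Bool), t₂ v = some b → t₁ v = none) :
    SubTerm t₂ (combine t₁ t₂) := by
  intro v b hv
  simp [combine, hdisj v b hv, hv]

lemma combine_none {t₁ t₂ : Term V} {v : V} (h1 : t₁ v = none) (h2 : t₂ v = none) :
    combine t₁ t₂ v = none := by simp [combine, h1, h2]

end Aux

/-- for f, g over disjoint variable sets, (t₁,t₂) ↦ t₁ ∧ t₂ is a bijection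
between IP(f) × IP(g) and IP(f ∧ g). -/
theorem stmt1 {V : Type*} (X Y : Finset V) (hXY : Disjoint X Y)
    (f g : (V → Bool) → Bool)
    (hf : ∀ a a' : V → Bool, (∀ v ∈ X, a v = a' v) → f a = f a')
    (hg : ∀ a a' : V → Bool, (∀ v ∈ Y, a v = a' v) → g a = g a') :
    (∀ t : Term V, t ∈ IP (fAnd f g) ↔ ∃ t₁ ∈ IP f, ∃ t₂ ∈ IP g, t = combine t₁ t₂) ∧
    (∀ t₁ ∈ IP f, ∀ t₁' ∈ IP f, ∀ t₂ ∈ IP g, ∀ t₂' ∈ IP g,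
      combine t₁ t₂ = combine t₁' t₂' → t₁ = t₁' ∧ t₂ = t₂') := by
  classical
  have hXnY : ∀ v ∈ X, v ∉ Y := fun v hv => Finset.disjoint_left.mp hXY hv
  have hYnX : ∀ v ∈ Y, v ∉ X := fun v hv => Finset.disjoint_right.mp hXY hv
  have hfg : ∀ a a' : V → Bool, (∀ v ∈ X ∪ Y, a v = a' v) → fAnd f g a = fAnd f g a' := by
    intro a a' h
    unfold fAnd
    rw [hf a a' (fun v hv => h v (Finset.mem_union_left _ hv)),
        hg a a' (fun v hv => h v (Finset.mem_union_right _ hv))]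
  have himp : ∀ t : Term V, Implicant (fAnd f g) t ↔ Implicant f t ∧ Implicant g t := by
    intro t
    constructor
    · intro h
      constructor
      · intro a ha
        have := h a ha
        simp only [fAnd, Bool.and_eq_true] at this
        exact this.1
      · intro a ha
        have := h a ha
        simp only [fAnd, Bool.and_eq_true] at this
        exact this.2
    · rintro ⟨h1, h2⟩ a ha
      simp only [fAnd, Bool.and_eq_true]
      exact ⟨h1 a ha, h2 a ha⟩
  -- supports of prime implicants
  have hsupf : ∀ t ∈ IP f, ∀ v (b : Bool), t v = some b → v ∈ X :=
    fun t ht v b hv => support_subset hf ht hv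
  have hsupg : ∀ t ∈ IP g, ∀ v (b : Bool), t v = some b → v ∈ Y :=
    fun t ht v b hv => support_subset hg ht hv
  constructor
  · intro t
    constructor
    · -- forward: decompose
      intro ht
      set t₁ := restrX X t with ht₁
      set t₂ := restrX Y t with ht₂
      have hsup : ∀ v (b : Bool), t v = some b → v ∈ X ∪ Y :=
        fun v b hv => support_subset hfg ht hv
      have htimp := (himp t).mp ht.1
      -- t = combine t₁ t₂
      have hcomb : t = combine t₁ t₂ := by
        funext v
        cases hv : t v with
        | some b =>
          rcases Finset.mem_union.mp (hsup v b hv) with hvx | hvy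
          · have : t₁ v = some b := by rw [ht₁, restrX_eq_of_mem hvx, hv]
            exact (combine_sub_left t₁ t₂ v b this).symm
          · by_cases hvx : v ∈ X
            · have : t₁ v = some b := by rw [ht₁, restrX_eq_of_mem hvx, hv]
              exact (combine_sub_left t₁ t₂ v b this).symm
            · have h1 : t₁ v = none := by simp [ht₁, restrX, hvx]
              have h2 : t₂ v = some b := by rw [ht₂, restrX_eq_of_mem hvy, hv]
              simp [combine, h1, h2]
        | none =>
          have h1 : t₁ v = none := by
            cases hv1 : t₁ v with
            | none => rfl
            | some b => exact absurd (restrX_sub X t v b hv1) (by simp [hv])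
          have h2 : t₂ v = none := by
            cases hv2 : t₂ v with
            | none => rfl
            | some b => exact absurd (restrX_sub Y t v b hv2) (by simp [hv])
          exact (combine_none h1 h2).symm
      -- disjoint supports of t₁ t₂
      have hd12 : ∀ v (b : Bool), t₂ v = some b → t₁ v = none := by
        intro v b hv
        have hvy := restrX_mem hv
        simp [ht₁, restrX, hYnX v hvy]
      refine ⟨t₁, ⟨implicant_restrX hf htimp.1, ?_⟩, t₂, ⟨implicant_restrX hg htimp.2, ?_⟩, hcomb⟩
      · -- primality of t₁
        intro s hs hsimp
        have hs_none : ∀ v (b : Bool), t₂ v = some b → s v = none := by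
          intro v b hv
          cases hsv : s v with
          | none => rfl
          | some c => exact absurd (hs v c hsv) (by simp [hd12 v b hv])
        have hcimp : Implicant (fAnd f g) (combine s t₂) := by
          refine (himp _).mpr ⟨implicant_mono (combine_sub_left s t₂) hsimp, ?_⟩
          refine implicant_mono ?_ (implicant_restrX hg htimp.2)
          intro v b hv
          have hv' : t₂ v = some b := hv
          simp [combine, hs_none v b hv', hv']
        have hcsub : SubTerm (combine s t₂) t := by
          intro v b hv
          rcases combine_some hv with h | ⟨_, h⟩
          · exact restrX_sub X t v b (hs v b h)
          · exact restrX_sub Y t v b h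
        have heq := ht.2 _ hcsub hcimp
        refine subterm_antisymm hs ?_
        intro v b hv
        have hvx := restrX_mem hv
        have : combine s t₂ v = some b := by
          rw [heq, hcomb]
          exact combine_sub_left t₁ t₂ v b hv
        rcases combine_some this with h | ⟨_, h⟩
        · exact h
        · exact absurd (restrX_mem h) (hXnY v hvx)
      · -- primality of t₂
        intro s hs hsimp
        have hvY : ∀ v (b : Bool), s v = some b → v ∈ Y :=
          fun v b hv => restrX_mem (hs v b hv)
        have hs_none : ∀ v (b : Bool), s v = some b → t₁ v = none := by
          intro v b hv
          simp [ht₁, restrX, hYnX v (hvY v b hv)]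
        have hcimp : Implicant (fAnd f g) (combine t₁ s) := by
          refine (himp _).mpr ⟨implicant_mono (combine_sub_left t₁ s) (implicant_restrX hf htimp.1), ?_⟩
          exact implicant_mono (combine_sub_right hs_none) hsimp
        have hcsub : SubTerm (combine t₁ s) t := by
          intro v b hv
          rcases combine_some hv with h | ⟨_, h⟩
          · exact restrX_sub X t v b h
          · exact restrX_sub Y t v b (hs v b h)
        have heq := ht.2 _ hcsub hcimp
        refine subterm_antisymm hs ?_
        intro v b hv
        have hvy := restrX_mem hv
        have h1 : t₁ v = none := by simp [ht₁, restrX, hYnX v hvy]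
        have : combine t₁ s v = some b := by
          rw [heq, hcomb]
          simp [combine, h1, hv]
        rcases combine_some this with h | ⟨_, h⟩
        · rw [h1] at h; exact absurd h (by simp)
        · exact h
    · -- backward: combination is prime
      rintro ⟨t₁, ht₁, t₂, ht₂, rfl⟩
      have hd12 : ∀ v (b : Bool), t₂ v = some b → t₁ v = none := by
        intro v b hv
        cases hv1 : t₁ v with
        | none => rfl
        | some c => exact absurd (hsupf t₁ ht₁ v c hv1) (hYnX v (hsupg t₂ ht₂ v b hv))
      have himpc : Implicant (fAnd f g) (combine t₁ t₂) :=
        (himp _).mpr ⟨implicant_mono (combine_sub_left t₁ t₂) ht₁.1,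
          implicant_mono (combine_sub_right hd12) ht₂.1⟩
      refine ⟨himpc, ?_⟩
      intro s hs hsimp
      have hsimp' := (himp s).mp hsimp
      have hs₁ : restrX X s = t₁ := by
        apply ht₁.2
        · intro v b hv
          have hvx := restrX_mem hv
          rcases combine_some (hs v b (restrX_sub X s v b hv)) with h | ⟨_, h⟩
          · exact h
          · exact absurd (hsupg t₂ ht₂ v b h) (hXnY v hvx)
        · exact implicant_restrX hf hsimp'.1
      have hs₂ : restrX Y s = t₂ := by
        apply ht₂.2
        · intro v b hv
          have hvy := restrX_mem hv
          rcases combine_some (hs v b (restrX_sub Y s v b hv)) with h | ⟨_, h⟩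
          · exact absurd (hsupf t₁ ht₁ v b h) (hYnX v hvy)
          · exact h
        · exact implicant_restrX hg hsimp'.2
      refine subterm_antisymm hs ?_
      intro v b hv
      rcases combine_some hv with h | ⟨_, h⟩
      · rw [← hs₁] at h; exact restrX_sub X s v b h
      · rw [← hs₂] at h; exact restrX_sub Y s v b h
  · -- uniqueness
    intro t₁ ht₁ t₁' ht₁' t₂ ht₂ t₂' ht₂' heq
    have key : ∀ (u₁ u₁' u₂' : Term V), u₁ ∈ IP f → u₁' ∈ IP f → u₂' ∈ IP g →
        combine u₁ u₂' = combine u₁' u₂' → True := fun _ _ _ _ _ _ _ => trivial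
    have h1 : ∀ (u : Term V) (u' : Term V) (w w' : Term V),
        u ∈ IP f → u' ∈ IP f → w ∈ IP g → w' ∈ IP g →
        combine u w = combine u' w' → SubTerm u u' := by
      intro u u' w w' hu hu' hw hw' he v b hv
      have : combine u' w' v = some b := by rw [← he]; exact combine_sub_left u w v b hv
      rcases combine_some this with h | ⟨_, h⟩
      · exact h
      · exact absurd (hsupg w' hw' v b h) (hXnY v (hsupf u hu v b hv))
    have h2 : ∀ (u : Term V) (u' : Term V) (w w' : Term V),
        u ∈ IP f → u' ∈ IP f → w ∈ IP g → w' ∈ IP g →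
        combine u w = combine u' w' → SubTerm w w' := by
      intro u u' w w' hu hu' hw hw' he v b hv
      have h1v : u v = none := by
        cases hu1 : u v with
        | none => rfl
        | some c => exact absurd (hsupf u hu v c hu1) (hYnX v (hsupg w hw v b hv))
      have : combine u' w' v = some b := by rw [← he]; simp [combine, h1v, hv]
      rcases combine_some this with h | ⟨_, h⟩
      · exact absurd (hsupf u' hu' v b h) (hYnX v (hsupg w hw v b hv))
      · exact h
    exact ⟨subterm_antisymm (h1 t₁ t₁' t₂ t₂' ht₁ ht₁' ht₂ ht₂' heq)
             (h1 t₁' t₁ t₂' t₂ ht₁' ht₁ ht₂' ht₂ heq.symm),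
           subterm_antisymm (h2 t₁ t₁' t₂ t₂' ht₁ ht₁' ht₂ ht₂' heq)
             (h2 t₁' t₁ t₂' t₂ ht₁' ht₁ ht₂' ht₂ heq.symm)⟩
end

section
/- Let f be a Boolean function, x a variable, and ℓ a literal on x (either x or ¬x). Let t be a prime implicant of the restriction f|ℓ (the function obtained by fixing x according to ℓ). If t is an implicant of f|¬ℓ, then t is a prime implicant of f; otherwise t ∧ ℓ is a prime implicant of f. -/
/-- for t ∈ IP(f|ℓ): if t ⊨ f|¬ℓ then t ∈ IP(f), otherwise t ∧ ℓ ∈ IP(f). -/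
theorem stmt2 {V : Type*} [DecidableEq V] (f : (V → Bool) → Bool) (x : V) (b : Bool)
    (t : Term V) (ht : t ∈ IP (restrict f x b)) (htx : t x = none) :
    (Implicant (restrict f x (!b)) t → t ∈ IP f) ∧
    (¬ Implicant (restrict f x (!b)) t → Function.update t x (some b) ∈ IP f) := by
  obtain ⟨htI, htP⟩ := ht
  -- any s ⊆ t with s x = none that is an implicant of f is an implicant of both restrictions
  have key : ∀ (s : Term V) (c : Bool), s x = none → Implicant f s →
      Implicant (restrict f x c) s := by
    intro s c hsx hsf a ha
    apply hsf
    intro v bv hv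
    rcases eq_or_ne v x with rfl | hvx
    · simp [hv] at hsx
    · simpa [Function.update_of_ne hvx] using ha v bv hv
  have subnone : ∀ s : Term V, SubTerm s t → s x = none := by
    intro s hs
    cases hsx : s x with
    | none => rfl
    | some c => have := hs x c hsx; simp [htx] at this
  constructor
  · -- case 1
    intro hneg
    refine ⟨?_, ?_⟩
    · intro a ha
      have h1 : restrict f x b a = true := htI a ha
      have h2 : restrict f x (!b) a = true := hneg a ha
      have : a = Function.update a x (a x) := by
        funext v; rcases eq_or_ne v x with rfl | hvx <;> simp [Function.update_of_ne, *]
      cases hax : a x with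
      | false =>
        cases b with
        | false => rw [this, hax]; exact h1
        | true => rw [this, hax]; simpa [restrict] using h2
      | true =>
        cases b with
        | false => rw [this, hax]; simpa [restrict] using h2
        | true => rw [this, hax]; exact h1
    · intro s hs hsf
      exact htP s hs (key s b (subnone s hs) hsf)
  · -- case 2
    intro hnot
    set t' := Function.update t x (some b) with ht'
    refine ⟨?_, ?_⟩
    · intro a ha
      have hax : a x = b := ha x b (by simp [ht'])
      have : a = Function.update a x b := by
        funext v; rcases eq_or_ne v x with rfl | hvx <;> simp [Function.update_of_ne, hax, *]
      rw [this]
      exact htI a (fun v bv hv => by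
        have hvx : v ≠ x := by rintro rfl; simp [hv] at htx
        simpa [Function.update_of_ne hvx] using ha v bv (by simp [ht', Function.update_of_ne hvx, hv]))
    · intro s hs hsf
      cases hsx : s x with
      | none =>
        exfalso
        have hst : SubTerm s t := by
          intro v bv hv
          have hvx : v ≠ x := by rintro rfl; simp [hv] at hsx
          simpa [ht', Function.update_of_ne hvx] using hs v bv hv
        have := htP s hst (key s b hsx hsf)
        subst this
        exact hnot (key s (!b) hsx hsf)
      | some c =>
        have hc : c = b := by
          have := hs x c hsx; simp [ht'] at this; exact this.symm
        rw [hc] at hsx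
        set s₀ : Term V := Function.update s x none with hs₀
        have hs₀t : SubTerm s₀ t := by
          intro v bv hv
          have hvx : v ≠ x := by rintro rfl; simp [hs₀] at hv
          have := hs v bv (by simpa [hs₀, Function.update_of_ne hvx] using hv)
          simpa [ht', Function.update_of_ne hvx] using this
        have hs₀I : Implicant (restrict f x b) s₀ := by
          intro a ha
          apply hsf
          intro v bv hv
          rcases eq_or_ne v x with rfl | hvx
          · have hb : bv = b := by rw [hv] at hsx; exact Option.some_inj.mp hsx
            simp [hb]
          · simp only [Function.update_of_ne hvx]
            exact ha v bv (by simp [hs₀, Function.update_of_ne hvx, hv])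
        have heq : s₀ = t := htP s₀ hs₀t hs₀I
        funext v
        rcases eq_or_ne v x with rfl | hvx
        · simp [ht', hsx]
        · have : s₀ v = t v := by rw [heq]
          simpa [hs₀, ht', Function.update_of_ne hvx] using this
end

section
/- For any Boolean function f and variable x, the set of prime implicants of f equals the union of: (1) terms t ∧ ¬x where t is a prime implicant of f|¬x that is not an implicant of f|x; (2) terms t ∧ x where t is a prime implicant of f|x that is not an implicant of f|¬x; and (3) the prime implicants of the conjunction f|¬x ∧ f|x. -/
section aux
variable {V : Type*} [DecidableEq V]
set_option linter.unusedSectionVars false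

lemma restrict_update (f : (V → Bool) → Bool) (x : V) (b c : Bool) (a : V → Bool) :
    restrict f x b (Function.update a x c) = restrict f x b a := by
  simp [restrict, Function.update_idem]

lemma extends_update_assign {a : V → Bool} {t : Term V} {x : V} {c : Bool}
    (hx : t x = none) (h : Extends a t) : Extends (Function.update a x c) t := by
  intro v b hv
  rcases eq_or_ne v x with rfl | hvx
  · rw [hx] at hv; cases hv
  · rw [Function.update_of_ne hvx]; exact h v b hv

lemma L1 {f : (V → Bool) → Bool} {x : V} {t : Term V} (hx : t x = none) :
    Implicant f t ↔ Implicant (restrict f x false) t ∧ Implicant (restrict f x true) t := by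
  constructor
  · intro h
    constructor <;> intro a ha <;> exact h _ (extends_update_assign hx ha)
  · rintro ⟨h0, h1⟩ a ha
    cases hb : a x
    · have h2 : Function.update a x false = a := by rw [← hb, Function.update_eq_self]
      have := h0 a ha
      rwa [restrict, h2] at this
    · have h2 : Function.update a x true = a := by rw [← hb, Function.update_eq_self]
      have := h1 a ha
      rwa [restrict, h2] at this

lemma L2 {f : (V → Bool) → Bool} {x : V} {t : Term V} (hx : t x = none) (b : Bool) :
    Implicant (restrict f x b) t ↔ Implicant f (Function.update t x (some b)) := by
  constructor
  · intro h a ha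
    have ha' : Extends a t := by
      intro v c hv
      rcases eq_or_ne v x with rfl | hvx
      · rw [hx] at hv; cases hv
      · exact ha v c (by rwa [Function.update_of_ne hvx])
    have hax : a x = b := ha x b (by simp)
    have := h a ha'
    rwa [restrict, show b = a x from hax.symm, Function.update_eq_self] at this
  · intro h a ha
    refine h (Function.update a x b) ?_
    intro v c hv
    rcases eq_or_ne v x with rfl | hvx
    · simp only [Function.update_self] at hv ⊢
      exact Option.some.inj hv
    · rw [Function.update_of_ne hvx] at hv
      rw [Function.update_of_ne hvx]
      exact ha v c hv

lemma implicant_fAnd {g h : (V → Bool) → Bool} {t : Term V} :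
    Implicant (fAnd g h) t ↔ Implicant g t ∧ Implicant h t := by
  constructor
  · intro H
    constructor <;> intro a ha <;> have := H a ha <;>
      simp only [fAnd, Bool.and_eq_true] at this
    exacts [this.1, this.2]
  · rintro ⟨h1, h2⟩ a ha
    simp [fAnd, h1 a ha, h2 a ha]

lemma sub_none {s t : Term V} {x : V} (hs : SubTerm s t) (hx : t x = none) : s x = none := by
  cases hsx : s x with
  | none => rfl
  | some b => have := hs x b hsx; rw [hx] at this; cases this

lemma pi_none {g : (V → Bool) → Bool} {x : V}
    (hg : ∀ a (c : Bool), g (Function.update a x c) = g a)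
    {t : Term V} (ht : PrimeImplicant g t) : t x = none := by
  by_contra h
  obtain ⟨b, hb⟩ : ∃ b, t x = some b := by cases htx : t x with
    | none => exact absurd htx h
    | some b => exact ⟨b, rfl⟩
  have hsub : SubTerm (Function.update t x none) t := by
    intro v c hv
    rcases eq_or_ne v x with rfl | hvx
    · rw [Function.update_self] at hv; cases hv
    · rwa [Function.update_of_ne hvx] at hv
  have himp : Implicant g (Function.update t x none) := by
    intro a ha
    have := ht.1 (Function.update a x b) ?_
    · rwa [hg] at this
    · intro v c hv
      rcases eq_or_ne v x with rfl | hvx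
      · rw [hb] at hv; injection hv with h'; rw [Function.update_self]; exact h'
      · rw [Function.update_of_ne hvx]
        exact ha v c (by rwa [Function.update_of_ne hvx])
  have := ht.2 _ hsub himp
  apply h
  rw [← this, Function.update_self]

lemma main_some (f : (V → Bool) → Bool) (x : V) (b : Bool) {t : Term V}
    (ht : PrimeImplicant (restrict f x b) t)
    (hn : ¬ Implicant (restrict f x (!b)) t) :
    PrimeImplicant f (Function.update t x (some b)) := by
  have hx : t x = none := pi_none (fun a c => restrict_update f x b c a) ht
  constructor
  · exact (L2 hx b).1 ht.1
  · intro s hs himp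
    cases hsx : s x with
    | none =>
      have hst : SubTerm s t := by
        intro v c hv
        rcases eq_or_ne v x with rfl | hvx
        · rw [hsx] at hv; cases hv
        · have := hs v c hv; rwa [Function.update_of_ne hvx] at this
      have hpair := (L1 hsx).1 himp
      have h0 : Implicant (restrict f x b) s := by cases b; exacts [hpair.1, hpair.2]
      have h1 : Implicant (restrict f x (!b)) s := by cases b; exacts [hpair.2, hpair.1]
      have heq := ht.2 s hst h0
      exact absurd (heq ▸ h1) hn
    | some c =>
      have hcb : c = b := by
        have := hs x c hsx
        rw [Function.update_self] at this
        exact (Option.some.inj this).symm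
      have hs't : SubTerm (Function.update s x none) t := by
        intro v d hv
        rcases eq_or_ne v x with rfl | hvx
        · rw [Function.update_self] at hv; cases hv
        · rw [Function.update_of_ne hvx] at hv
          have := hs v d hv
          rwa [Function.update_of_ne hvx] at this
      have h0 : Implicant (restrict f x b) (Function.update s x none) := by
        intro a ha
        show f (Function.update a x b) = true
        apply himp
        intro v d hv
        rcases eq_or_ne v x with rfl | hvx
        · rw [hsx] at hv
          rw [Function.update_self, ← Option.some.inj hv, hcb]
        · rw [Function.update_of_ne hvx]
          exact ha v d (by rwa [Function.update_of_ne hvx])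
      have heq := ht.2 _ hs't h0
      funext v
      rcases eq_or_ne v x with rfl | hvx
      · rw [hsx, Function.update_self, hcb]
      · rw [Function.update_of_ne hvx, ← heq, Function.update_of_ne hvx]

lemma main_none {f : (V → Bool) → Bool} {x : V} {u : Term V}
    (hu : PrimeImplicant f u) (hx : u x = none) :
    PrimeImplicant (fAnd (restrict f x false) (restrict f x true)) u := by
  constructor
  · exact implicant_fAnd.2 ((L1 hx).1 hu.1)
  · intro s hs himp
    exact hu.2 s hs ((L1 (sub_none hs hx)).2 (implicant_fAnd.1 himp))

lemma main_none_rev {f : (V → Bool) → Bool} {x : V} {u : Term V}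
    (hc : PrimeImplicant (fAnd (restrict f x false) (restrict f x true)) u) :
    PrimeImplicant f u := by
  have hx : u x = none := pi_none (fun a c => by
    simp only [fAnd, restrict_update]) hc
  constructor
  · exact (L1 hx).2 (implicant_fAnd.1 hc.1)
  · intro s hs himp
    exact hc.2 s hs (implicant_fAnd.2 ((L1 (sub_none hs hx)).1 himp))

lemma main_some_rev (f : (V → Bool) → Bool) (x : V) (b : Bool) {u : Term V}
    (hu : PrimeImplicant f u) (hx : u x = some b) :
    PrimeImplicant (restrict f x b) (Function.update u x none) ∧
    ¬ Implicant (restrict f x (!b)) (Function.update u x none) ∧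
    u = Function.update (Function.update u x none) x (some b) := by
  set t := Function.update u x none with ht
  have htx : t x = none := Function.update_self x none u
  have hueq : u = Function.update t x (some b) := by
    funext v
    rcases eq_or_ne v x with rfl | hvx
    · rw [Function.update_self, hx]
    · rw [Function.update_of_ne hvx, ht, Function.update_of_ne hvx]
  have hbim : Implicant (restrict f x b) t := (L2 htx b).2 (hueq ▸ hu.1)
  refine ⟨⟨hbim, ?_⟩, ?_, hueq⟩
  · intro s hst himp
    have hsx : s x = none := sub_none hst htx
    have hs'u : SubTerm (Function.update s x (some b)) u := by
      intro v d hv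
      rcases eq_or_ne v x with rfl | hvx
      · rw [Function.update_self] at hv
        rw [hx, ← Option.some.inj hv]
      · rw [Function.update_of_ne hvx] at hv
        have := hst v d hv
        rw [ht, Function.update_of_ne hvx] at this
        exact this
    have himp' : Implicant f (Function.update s x (some b)) := (L2 hsx b).1 himp
    have heq := hu.2 _ hs'u himp'
    funext v
    rcases eq_or_ne v x with rfl | hvx
    · rw [hsx, ht, Function.update_self]
    · rw [ht, Function.update_of_ne hvx, ← heq, Function.update_of_ne hvx]
  · intro h
    have hft : Implicant f t := (L1 htx).2 (by
      cases b
      · exact ⟨hbim, h⟩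
      · exact ⟨h, hbim⟩)
    have hsub : SubTerm t u := by
      intro v d hv
      rcases eq_or_ne v x with rfl | hvx
      · rw [ht, Function.update_self] at hv; cases hv
      · rwa [ht, Function.update_of_ne hvx] at hv
    have heq := hu.2 t hsub hft
    have : t x = u x := by rw [heq]
    rw [htx, hx] at this
    cases this
end aux

/-- Shannon-style decomposition of the set of prime implicants. -/
theorem stmt3 {V : Type*} [DecidableEq V] (f : (V → Bool) → Bool) (x : V) :
    IP f =
      {u | ∃ t, t ∈ IP (restrict f x false) ∧ ¬ Implicant (restrict f x true) t ∧
            u = Function.update t x (some false)} ∪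
      {u | ∃ t, t ∈ IP (restrict f x true) ∧ ¬ Implicant (restrict f x false) t ∧
            u = Function.update t x (some true)} ∪
      IP (fAnd (restrict f x false) (restrict f x true)) := by
  ext u
  constructor
  · intro hu
    cases hux : u x with
    | none => exact Or.inr (main_none hu hux)
    | some b =>
      cases b
      · obtain ⟨h1, h2, h3⟩ := main_some_rev f x false hu hux
        exact Or.inl (Or.inl ⟨_, h1, by simpa using h2, h3⟩)
      · obtain ⟨h1, h2, h3⟩ := main_some_rev f x true hu hux
        exact Or.inl (Or.inr ⟨_, h1, by simpa using h2, h3⟩)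
  · rintro ((⟨t, ht, hn, rfl⟩ | ⟨t, ht, hn, rfl⟩) | hc)
    · exact main_some f x false ht (by simpa using hn)
    · exact main_some f x true ht (by simpa using hn)
    · exact main_none_rev hc
end

section
/- Deciding whether a Boolean function given as a CNF formula has an implicant t with var(t) ⊆ Y, for a given subset Y of variables, generalizes SAT: specifically, for the construction where each clause c_i is guarded by a fresh variable z_i via B^(1) defined by B^(i) = (¬z_i ∧ c_i) ∨ (z_i ∧ B^(i+1)) with B^(m+1) = 1, the function B^(1) has an implicant t with var(t) ⊆ var(φ) if and only if φ = c₁ ∧ … ∧ c_m is satisfiable. -/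
def evalClause {V : Type*} (C : V → Option Bool) (a : V → Bool) : Prop :=
  ∃ v b, C v = some b ∧ a v = b

def Bfun {V : Type*} (m : ℕ) (clauses : Fin m → V → Option Bool) (i : ℕ)
    (a : (V ⊕ Fin m) → Bool) : Prop :=
  if h : i < m then
    ((a (Sum.inr ⟨i, h⟩) = false ∧ evalClause (clauses ⟨i, h⟩) (fun v => a (Sum.inl v))) ∨
     (a (Sum.inr ⟨i, h⟩) = true ∧ Bfun m clauses (i + 1) a))
  else True
termination_by m - i


lemma bfun_all {V : Type*} (m : ℕ) (clauses : Fin m → V → Option Bool)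
    (a : (V ⊕ Fin m) → Bool)
    (h : ∀ k : Fin m, evalClause (clauses k) (fun v => a (Sum.inl v))) :
    ∀ i, Bfun m clauses i a := by
  intro i
  rw [Bfun]
  split
  · rename_i hi
    cases hb : a (Sum.inr ⟨i, hi⟩) with
    | false => exact Or.inl ⟨rfl, h _⟩
    | true => exact Or.inr ⟨rfl, bfun_all m clauses a h (i + 1)⟩
  · trivial
termination_by i => m - i
decreasing_by omega

lemma bfun_gives {V : Type*} (m : ℕ) (clauses : Fin m → V → Option Bool)
    (a : (V ⊕ Fin m) → Bool) (ii : Fin m) :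
    ∀ j, j ≤ ii.1 →
      (∀ k : Fin m, j ≤ k.1 → k.1 < ii.1 → a (Sum.inr k) = true) →
      a (Sum.inr ii) = false → Bfun m clauses j a →
      evalClause (clauses ii) (fun v => a (Sum.inl v)) := by
  intro j hj hk hii hB
  have hjm : j < m := lt_of_le_of_lt hj ii.2
  rw [Bfun] at hB
  rw [dif_pos hjm] at hB
  rcases Nat.eq_or_lt_of_le hj with heq | hlt
  · have : (⟨j, hjm⟩ : Fin m) = ii := Fin.ext heq
    rw [this] at hB
    rcases hB with ⟨_, h⟩ | ⟨h, _⟩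
    · exact h
    · rw [hii] at h; simp at h
  · rcases hB with ⟨h, _⟩ | ⟨_, hB⟩
    · rw [hk ⟨j, hjm⟩ le_rfl hlt] at h; simp at h
    · exact bfun_gives m clauses a ii (j + 1) hlt
        (fun k h1 h2 => hk k (by omega) h2) hii hB
termination_by j => ii.1 - j
decreasing_by omega

/-- B^(1) has an implicant over var(φ) iff the CNF φ is satisfiable. -/
theorem stmt10 {V : Type*} (m : ℕ) (clauses : Fin m → V → Option Bool) :
    (∃ t : (V ⊕ Fin m) → Option Bool,
      (∀ w, t w ≠ none → ∃ v, w = Sum.inl v) ∧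
      (∀ a : (V ⊕ Fin m) → Bool, (∀ w b, t w = some b → a w = b) →
        Bfun m clauses 0 a)) ↔
    (∃ a : V → Bool, ∀ i, evalClause (clauses i) a) := by
  constructor
  · rintro ⟨t, hsup, himp⟩
    have htinr : ∀ k : Fin m, t (Sum.inr k) = none := by
      intro k
      by_contra h
      obtain ⟨v, hv⟩ := hsup _ h
      cases hv
    refine ⟨fun v => (t (Sum.inl v)).getD false, fun i => ?_⟩
    set ai : (V ⊕ Fin m) → Bool := fun w =>
      match w with
      | Sum.inl v => (t (Sum.inl v)).getD false
      | Sum.inr k => decide (k ≠ i) with hai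
    have hext : ∀ w b, t w = some b → ai w = b := by
      intro w b hw
      cases w with
      | inl v => simp [hai, hw]
      | inr k => rw [htinr k] at hw; cases hw
    have hB := himp ai hext
    have := bfun_gives m clauses ai i 0 (Nat.zero_le _)
      (fun k _ h2 => by
        simp only [hai]
        simp only [decide_eq_true_eq]
        intro h; rw [h] at h2; omega)
      (by simp [hai]) hB
    exact this
  · rintro ⟨a, ha⟩
    refine ⟨fun w => match w with | Sum.inl v => some (a v) | Sum.inr _ => none,
      ?_, ?_⟩
    · rintro (v | k) h
      · exact ⟨v, rfl⟩
      · simp at h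
    · intro a' hext
      apply bfun_all
      intro k
      obtain ⟨v, b, hc, hab⟩ := ha k
      exact ⟨v, b, hc, by show a' (Sum.inl v) = b; rw [hext (Sum.inl v) (a v) rfl, hab]⟩
end

section
/- With f as above (satisfying assignments exactly {a_E : E ∈ H}), the prime implicants of ¬f that consist only of positive literals are exactly the terms ⋀_{i∈T} x_i for T a minimal transversal of H. Consequently, the sufficient reasons for the all-ones assignment a_∅ given ¬f are in bijection with the minimal transversals of H. -/
/-- prime implicants of ¬f consisting only of positive literals are exactly
the terms ⋀_{i∈T} x_i for T a minimal transversal; hence SR(¬f, a_∅) corresponds to the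
minimal transversals. -/
theorem stmt14 (n : ℕ) (Hs : Set (Finset (Fin n))) (hne : ∀ E ∈ Hs, E.Nonempty)
    (f : (Fin n → Bool) → Bool)
    (hf : ∀ a, f a = true ↔ ∃ E ∈ Hs, a = fun i => decide (i ∉ E)) :
    (∀ t : Term (Fin n),
      ((PrimeImplicant (fun a => !f a) t ∧ ∀ v b, t v = some b → b = true) ↔
        ∃ T : Finset (Fin n),
          ((∀ E ∈ Hs, ∃ i ∈ T, i ∈ E) ∧
            ∀ T' ⊆ T, (∀ E ∈ Hs, ∃ i ∈ T', i ∈ E) → T' = T) ∧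
          t = fun i => if i ∈ T then some true else none)) ∧
    SR (fun a => !f a) (fun _ => true) =
      {t | ∃ T : Finset (Fin n),
        ((∀ E ∈ Hs, ∃ i ∈ T, i ∈ E) ∧
          ∀ T' ⊆ T, (∀ E ∈ Hs, ∃ i ∈ T', i ∈ E) → T' = T) ∧
        t = fun i => if i ∈ T then some true else none} := by
  classical
  have himp_of : ∀ (T : Finset (Fin n)), (∀ E ∈ Hs, ∃ i ∈ T, i ∈ E) →
      Implicant (fun a => !f a) (fun i => if i ∈ T then some true else none) := by
    intro T hT a ha
    show (!f a) = true
    cases hft : f a with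
    | false => rfl
    | true =>
      exfalso
      obtain ⟨E, hE, haE⟩ := (hf a).1 hft
      obtain ⟨i, hiT, hiE⟩ := hT E hE
      have h1 : a i = true := ha i true (by simp [hiT])
      rw [haE] at h1
      simp [hiE] at h1
  have main : ∀ t : Term (Fin n),
      ((PrimeImplicant (fun a => !f a) t ∧ ∀ v b, t v = some b → b = true) ↔
        ∃ T : Finset (Fin n),
          ((∀ E ∈ Hs, ∃ i ∈ T, i ∈ E) ∧
            ∀ T' ⊆ T, (∀ E ∈ Hs, ∃ i ∈ T', i ∈ E) → T' = T) ∧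
          t = fun i => if i ∈ T then some true else none) := by
    intro t
    constructor
    · rintro ⟨⟨himp, hprime⟩, hpos⟩
      set T := Finset.univ.filter (fun i => t i = some true) with hTdef
      have hmemT : ∀ i, i ∈ T ↔ t i = some true := by
        intro i; simp [hTdef]
      have htT : t = fun i => if i ∈ T then some true else none := by
        funext i
        by_cases h : t i = some true
        · rw [if_pos ((hmemT i).2 h)]; exact h
        · rw [if_neg (fun hc => h ((hmemT i).1 hc))]
          cases hti : t i with
          | none => rfl
          | some b =>
            have := hpos i b hti; subst this; exact absurd hti h
      have htrans : ∀ E ∈ Hs, ∃ i ∈ T, i ∈ E := by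
        intro E hE
        by_contra hc
        push_neg at hc
        have hext : Extends (fun i => decide (i ∉ E)) t := by
          intro v b hvb
          have hb := hpos v b hvb; subst hb
          have hvE := hc v ((hmemT v).2 hvb)
          simp [hvE]
        have h2 : (!f fun i => decide (i ∉ E)) = true := himp _ hext
        have hfE : f (fun i => decide (i ∉ E)) = true := (hf _).2 ⟨E, hE, rfl⟩
        rw [hfE] at h2
        simp at h2
      refine ⟨T, ⟨⟨htrans, ?_⟩, htT⟩⟩
      intro T' hT' htrans'
      have hs : SubTerm (fun i => if i ∈ T' then some true else none) t := by
        intro v b hvb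
        by_cases h : v ∈ T'
        · simp only [if_pos h] at hvb
          rw [htT]
          simpa [hT' h] using hvb
        · simp [if_neg h] at hvb
      have heq := hprime _ hs (himp_of T' htrans')
      ext i
      constructor
      · intro h; exact hT' h
      · intro h
        have hti : t i = some true := (hmemT i).1 h
        have hci := congrFun heq i
        rw [hti] at hci
        by_contra hc
        rw [if_neg hc] at hci
        exact (Option.some_ne_none true) hci.symm
    · rintro ⟨T, ⟨⟨htrans, hmin⟩, rfl⟩⟩
      refine ⟨⟨himp_of T htrans, ?_⟩, ?_⟩
      · intro s hs hsimpl
        set T' := Finset.univ.filter (fun i => s i = some true) with hT'def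
        have hmemT' : ∀ i, i ∈ T' ↔ s i = some true := by
          intro i; simp [hT'def]
        have hspos : ∀ v b, s v = some b → b = true ∧ v ∈ T := by
          intro v b hvb
          have h2 := hs v b hvb
          by_cases h : v ∈ T
          · simp only [if_pos h] at h2
            exact ⟨(Option.some.inj h2).symm, h⟩
          · simp [if_neg h] at h2
        have hT'sub : T' ⊆ T := by
          intro i hi
          exact (hspos i true ((hmemT' i).1 hi)).2
        have hsform : s = fun i => if i ∈ T' then some true else none := by
          funext i
          by_cases h : i ∈ T'
          · rw [if_pos h]; exact (hmemT' i).1 h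
          · rw [if_neg h]
            cases hsi : s i with
            | none => rfl
            | some b =>
              have hb := (hspos i b hsi).1; subst hb
              exact absurd ((hmemT' i).2 hsi) h
        have htrans' : ∀ E ∈ Hs, ∃ i ∈ T', i ∈ E := by
          intro E hE
          by_contra hc
          push_neg at hc
          have hext : Extends (fun i => decide (i ∉ E)) s := by
            intro v b hvb
            have hb := (hspos v b hvb).1; subst hb
            have hvE := hc v ((hmemT' v).2 hvb)
            simp [hvE]
          have h2 : (!f fun i => decide (i ∉ E)) = true := hsimpl _ hext
          have hfE : f (fun i => decide (i ∉ E)) = true := (hf _).2 ⟨E, hE, rfl⟩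
          rw [hfE] at h2
          simp at h2
        have hTT : T' = T := hmin T' hT'sub htrans'
        rw [hsform, hTT]
      · intro v b hvb
        by_cases h : v ∈ T
        · simp only [if_pos h] at hvb
          exact (Option.some.inj hvb).symm
        · simp [if_neg h] at hvb
  refine ⟨main, ?_⟩
  ext t
  simp only [SR, Set.mem_setOf_eq]
  constructor
  · rintro ⟨hpi, hext⟩
    exact (main t).1 ⟨hpi, fun v b h => (hext v b h).symm⟩
  · intro h
    obtain ⟨hpi, hpos⟩ := (main t).2 h
    exact ⟨hpi, fun v b hb => (hpos v b hb).symm⟩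
end

section
/- Let f be a Boolean function and x a variable. A term t (not mentioning x) is a prime implicant of f|¬x ∧ f|x if and only if t is a prime implicant of f not containing any literal on x. In particular, IP(f|¬x ∧ f|x) ⊆ IP(f). -/
/-- a term not mentioning x is a prime implicant of f|¬x ∧ f|x iff it is a
prime implicant of f; in particular IP(f|¬x ∧ f|x) ⊆ IP(f). -/
theorem stmt16 {V : Type*} [DecidableEq V] (f : (V → Bool) → Bool) (x : V) :
    (∀ t : Term V, t x = none →
      (PrimeImplicant (fAnd (restrict f x false) (restrict f x true)) t ↔
        PrimeImplicant f t)) ∧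
    IP (fAnd (restrict f x false) (restrict f x true)) ⊆ IP f := by

  set g := fAnd (restrict f x false) (restrict f x true) with hg
  have hgind : ∀ (a : V → Bool) (c : Bool), g (Function.update a x c) = g a := by
    intro a c
    simp [hg, fAnd, restrict, Function.update_idem]
  have himp : ∀ t : Term V, t x = none → (Implicant g t ↔ Implicant f t) := by
    intro t htx
    have hext : ∀ (a : V → Bool) (c : Bool), Extends a t →
        Extends (Function.update a x c) t := by
      intro a c ha v b hv
      have hvx : v ≠ x := by rintro rfl; simp [htx] at hv
      rw [Function.update_of_ne hvx]; exact ha v b hv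
    constructor
    · intro h a ha
      have h' := h a ha
      simp only [hg, fAnd, restrict, Bool.and_eq_true] at h'
      have : f (Function.update a x (a x)) = true := by
        cases hx : a x
        · simpa [hx] using h'.1
        · simpa [hx] using h'.2
      simpa using this
    · intro h a ha
      simp only [hg, fAnd, restrict, Bool.and_eq_true]
      exact ⟨h _ (hext a false ha), h _ (hext a true ha)⟩
  have hiff : ∀ t : Term V, t x = none → (PrimeImplicant g t ↔ PrimeImplicant f t) := by
    intro t htx
    have hsubx : ∀ s : Term V, SubTerm s t → s x = none := by
      intro s hs
      cases hsx : s x with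
      | none => rfl
      | some b => exact absurd (hs x b hsx) (by simp [htx])
    constructor
    · rintro ⟨h1, h2⟩
      exact ⟨(himp t htx).mp h1, fun s hs hi =>
        h2 s hs ((himp s (hsubx s hs)).mpr hi)⟩
    · rintro ⟨h1, h2⟩
      exact ⟨(himp t htx).mpr h1, fun s hs hi =>
        h2 s hs ((himp s (hsubx s hs)).mp hi)⟩
  refine ⟨hiff, ?_⟩
  intro t ht
  have htx : t x = none := by
    by_contra hne
    cases htx : t x with
    | none => exact hne htx
    | some b =>
      set t' : Term V := fun v => if v = x then none else t v with ht'
      have hsub : SubTerm t' t := by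
        intro v c hv
        simp only [ht'] at hv
        split at hv
        · exact absurd hv (by simp)
        · exact hv
      have himp' : Implicant g t' := by
        intro a ha
        have hext : Extends (Function.update a x b) t := by
          intro v c hv
          by_cases hvx : v = x
          · subst hvx
            rw [htx] at hv
            injection hv with hv
            simp [hv]
          · rw [Function.update_of_ne hvx]
            exact ha v c (by simp [ht', hvx, hv])
        have := ht.1 _ hext
        rwa [hgind a b] at this
      have heq := ht.2 t' hsub himp'
      have : t' x = none := by simp [ht']
      rw [heq, htx] at this
      exact absurd this (by simp)
  exact (hiff t htx).mp ht
end

section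
/- Let f and g be Boolean functions over disjoint variable sets. If t₁, t₁' are prime implicants of f and t₂, t₂' are prime implicants of g such that t₁ ∧ t₂ entails t₁' ∧ t₂', then t₁ = t₁' and t₂ = t₂'. In other words, among products of prime implicants taken from disjoint-variable factors, no product strictly entails another. -/
lemma pi_support {V : Type*} (X : Finset V) (f : (V → Bool) → Bool)
    (hf : ∀ a a' : V → Bool, (∀ v ∈ X, a v = a' v) → f a = f a')
    (t : Term V) (ht : PrimeImplicant f t) : ∀ v, v ∉ X → t v = none := by
  classical
  intro v hv
  by_contra hne
  obtain ⟨b, hb⟩ : ∃ b, t v = some b := by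
    cases h : t v with
    | none => exact absurd h hne
    | some b => exact ⟨b, rfl⟩
  set s : Term V := fun w => if w = v then none else t w with hs
  have hsub : SubTerm s t := by
    intro w b' hw
    simp only [hs] at hw
    split at hw
    · exact absurd hw (by simp)
    · exact hw
  have himp : Implicant f s := by
    intro a ha
    have h1 : Extends (Function.update a v b) t := by
      intro w b' hw
      by_cases hwv : w = v
      · subst hwv
        rw [hb] at hw
        simp at hw
        simp [hw]
      · rw [Function.update_of_ne hwv]
        exact ha w b' (by simp [hs, hwv, hw])
    have := ht.1 _ h1
    rw [← this]
    apply hf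
    intro w hw
    rw [Function.update_of_ne]
    rintro rfl; exact hv hw
  have := ht.2 s hsub himp
  have : s v = t v := by rw [this]
  simp [hs, hb] at this

/-- among products of prime implicants of disjoint-variable factors,
entailment forces equality componentwise. -/
theorem stmt17 {V : Type*} (X Y : Finset V) (hXY : Disjoint X Y)
    (f g : (V → Bool) → Bool)
    (hf : ∀ a a' : V → Bool, (∀ v ∈ X, a v = a' v) → f a = f a')
    (hg : ∀ a a' : V → Bool, (∀ v ∈ Y, a v = a' v) → g a = g a')
    (t₁ t₁' t₂ t₂' : Term V)
    (h1 : t₁ ∈ IP f) (h1' : t₁' ∈ IP f) (h2 : t₂ ∈ IP g) (h2' : t₂' ∈ IP g)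
    (hent : SubTerm (combine t₁' t₂') (combine t₁ t₂)) :
    t₁ = t₁' ∧ t₂ = t₂' := by
  have s1 := pi_support X f hf t₁ h1
  have s1' := pi_support X f hf t₁' h1'
  have s2 := pi_support Y g hg t₂ h2
  have s2' := pi_support Y g hg t₂' h2'
  -- supports: t₁,t₁' ⊆ X; t₂,t₂' ⊆ Y; X ∩ Y = ∅
  have hX : ∀ v b, t₁' v = some b → t₁ v = some b := by
    intro v b hv
    have hvX : v ∈ X := by
      by_contra h; rw [s1' v h] at hv; exact nomatch hv
    have hvY : v ∉ Y := fun h => (Finset.disjoint_left.mp hXY hvX) h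
    have : combine t₁' t₂' v = some b := by simp [combine, hv]
    have := hent v b this
    simp only [combine] at this
    cases h : t₁ v with
    | none => rw [h] at this; simp [Option.orElse] at this; rw [s2 v hvY] at this; exact nomatch this
    | some b' => simp only [h, Option.orElse] at this; simp at this; subst this; rfl
  have hY : ∀ v b, t₂' v = some b → t₂ v = some b := by
    intro v b hv
    have hvY : v ∈ Y := by
      by_contra h; rw [s2' v h] at hv; exact nomatch hv
    have hvX : v ∉ X := fun h => (Finset.disjoint_left.mp hXY h) hvY
    have : combine t₁' t₂' v = some b := by
      simp [combine, s1' v hvX, hv, Option.orElse]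
    have := hent v b this
    simp only [combine, s1 v hvX, Option.orElse] at this
    exact this
  constructor
  · exact (h1.2 t₁' hX h1'.1).symm ▸ rfl
  · exact (h2.2 t₂' hY h2'.1).symm ▸ rfl
end
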